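/- Let μ ∈ (0,1) and let p ∈ V_μ. Then W1(p, p*) = 2 (μ − (1 − p_0)), where p* is the shifted Bernoulli distribution with mean μ, which for μ ∈ (0,1) satisfies p*_0 = 1−μ, p*_1 = μ. -/
import Mathlib


/-- Cumulative distribution function of a pmf on ℕ: `F n = ∑_{m ≤ n} p m`. -/
noncomputable def cdf (p : ℕ → ℝ) (n : ℕ) : ℝ := ∑ m ∈ Finset.range (n + 1), p m

/-- Wasserstein-1 distance between two pmfs on ℕ, `W1(p,q) = ∑_{n ≥ 0} |F_n - H_n|`. -/
noncomputable def W1 (p q : ℕ → ℝ) : ℝ := ∑' n : ℕ, |cdf p n - cdf q n|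

/-- Gini index of a pmf on ℕ with mean μ: `G[p] = (1/(2μ)) ∑_i ∑_j |i-j| p_i p_j`. -/
noncomputable def Gini (μ : ℝ) (p : ℕ → ℝ) : ℝ :=
  (1 / (2 * μ)) * ∑' i : ℕ, ∑' j : ℕ, |(i : ℝ) - (j : ℝ)| * p i * p j

/-- The shifted Bernoulli distribution with mean μ:
`p*_{⌊μ⌋} = 1 - μ + ⌊μ⌋`, `p*_{⌊μ⌋+1} = μ - ⌊μ⌋`, `p*_n = 0` otherwise. -/
noncomputable def pstar (μ : ℝ) : ℕ → ℝ := fun n =>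
  if n = ⌊μ⌋₊ then 1 - μ + (⌊μ⌋₊ : ℝ)
  else if n = ⌊μ⌋₊ + 1 then μ - (⌊μ⌋₊ : ℝ)
  else 0

/-- The Dirac distribution on ℕ concentrated at `k`. -/
noncomputable def dirac (k : ℕ) : ℕ → ℝ := fun n => if n = k then 1 else 0

theorem stmt_11 (μ : ℝ) (hμ0 : 0 < μ) (hμ1 : μ < 1) (p : ℕ → ℝ)
    (hpos : ∀ n, 0 ≤ p n) (hsum : HasSum p 1)
    (hmean : HasSum (fun n : ℕ => (n : ℝ) * p n) μ) :
    W1 p (pstar μ) = 2 * (μ - (1 - p 0)) := by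
  have hfl : ⌊μ⌋₊ = 0 := Nat.floor_eq_zero.mpr hμ1
  have hp : Summable p := hsum.summable
  have hm : Summable (fun n : ℕ => (n : ℝ) * p n) := hmean.summable
  have hF_le : ∀ n, cdf p n ≤ 1 := fun n =>
    sum_le_hasSum _ (fun i _ => hpos i) hsum
  -- finite identity
  have hSN : ∀ N : ℕ, ∑ n ∈ Finset.range N, (1 - cdf p n)
      = (∑ m ∈ Finset.range N, (m : ℝ) * p m)
        + N * (1 - ∑ m ∈ Finset.range N, p m) := by
    intro N
    induction N with
    | zero => simp
    | succ N ih =>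
      rw [Finset.sum_range_succ, ih, Finset.sum_range_succ (f := fun m => (m : ℝ) * p m),
        Finset.sum_range_succ (f := p)]
      show _ + (1 - ∑ m ∈ Finset.range (N + 1), p m) = _
      rw [Finset.sum_range_succ (f := p)]
      push_cast; ring
  -- tail facts
  have htail : ∀ N : ℕ, 1 - ∑ m ∈ Finset.range N, p m = ∑' m, p (m + N) := by
    intro N
    have := Summable.sum_add_tsum_nat_add (f := p) N hp
    rw [hsum.tsum_eq] at this; linarith
  have htailm : ∀ N : ℕ, μ - ∑ m ∈ Finset.range N, (m : ℝ) * p m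
      = ∑' m : ℕ, ((m + N : ℕ) : ℝ) * p (m + N) := by
    intro N
    have := Summable.sum_add_tsum_nat_add (f := fun n : ℕ => (n : ℝ) * p n) N hm
    rw [hmean.tsum_eq] at this; linarith
  have hbound : ∀ N : ℕ, (N : ℝ) * (1 - ∑ m ∈ Finset.range N, p m)
      ≤ μ - ∑ m ∈ Finset.range N, (m : ℝ) * p m := by
    intro N
    rw [htail, htailm, ← tsum_mul_left]
    refine Summable.tsum_le_tsum (fun m => ?_) (((summable_nat_add_iff N).2 hp).mul_left _)
      ((summable_nat_add_iff N).2 hm)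
    have : (N : ℝ) ≤ ((m + N : ℕ) : ℝ) := by push_cast; linarith [Nat.cast_nonneg (α := ℝ) m]
    exact mul_le_mul_of_nonneg_right this (hpos _)
  have htail_nonneg : ∀ N : ℕ, 0 ≤ 1 - ∑ m ∈ Finset.range N, p m := by
    intro N; rw [htail]; exact tsum_nonneg fun m => hpos _
  -- key : HasSum (1 - F n) μ
  have key : HasSum (fun n => 1 - cdf p n) μ := by
    rw [hasSum_iff_tendsto_nat_of_nonneg (fun n => by linarith [hF_le n])]
    have hA := hmean.tendsto_sum_nat
    refine tendsto_of_tendsto_of_tendsto_of_le_of_le hA tendsto_const_nhds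
      (fun N => ?_) (fun N => ?_)
    · rw [hSN]
      have := htail_nonneg N
      nlinarith [Nat.cast_nonneg (α := ℝ) N]
    · rw [hSN]; linarith [hbound N]
  -- p 0 ≥ 1 - μ
  have hp0 : 1 - μ ≤ p 0 := by
    have h0 : 1 - cdf p 0 ≤ μ := by
      rw [← key.tsum_eq]
      exact Summable.le_tsum key.summable 0 (fun j _ => by linarith [hF_le j])
    have hc0 : cdf p 0 = p 0 := by simp [cdf]
    rw [hc0] at h0; linarith
  -- cdf of pstar
  have hH : ∀ n, cdf (pstar μ) n = if n = 0 then 1 - μ else 1 := by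
    intro n
    induction n with
    | zero => simp [cdf, pstar, hfl]
    | succ k ih =>
      have hstep : cdf (pstar μ) (k + 1) = cdf (pstar μ) k + pstar μ (k + 1) :=
        Finset.sum_range_succ _ _
      rw [hstep, ih]
      rcases k with _ | k
      · norm_num [pstar, hfl]
      · have h1 : (k + 1 + 1 : ℕ) ≠ 0 := by omega
        have h2 : (k + 1 + 1 : ℕ) ≠ 1 := by omega
        simp [pstar, hfl, h1, h2]
  -- g on tail
  have hg1 : ∀ n : ℕ, |cdf p (n + 1) - cdf (pstar μ) (n + 1)| = 1 - cdf p (n + 1) := by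
    intro n
    rw [hH, if_neg (Nat.succ_ne_zero n), abs_sub_comm,
      abs_of_nonneg (by linarith [hF_le (n + 1)])]
  have hH0 : cdf (pstar μ) 0 = 1 - μ := by simp [cdf, pstar, hfl]
  have hc0 : cdf p 0 = p 0 := by simp [cdf]
  have hg0 : |cdf p 0 - cdf (pstar μ) 0| = p 0 - (1 - μ) := by
    rw [hH0, hc0, abs_of_nonneg (by linarith)]
  have hgsum : Summable (fun n => |cdf p n - cdf (pstar μ) n|) := by
    rw [← summable_nat_add_iff 1]
    exact ((summable_nat_add_iff 1).2 key.summable).congr (fun n => (hg1 n).symm)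
  have htsum_tail : ∑' n : ℕ, (1 - cdf p (n + 1)) = μ - (1 - p 0) := by
    have := Summable.tsum_eq_zero_add key.summable
    rw [key.tsum_eq, hc0] at this
    linarith [this]
  have hW : W1 p (pstar μ) = |cdf p 0 - cdf (pstar μ) 0|
      + ∑' n : ℕ, |cdf p (n + 1) - cdf (pstar μ) (n + 1)| := Summable.tsum_eq_zero_add hgsum
  rw [hW, hg0, tsum_congr hg1, htsum_tail]
  ring
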